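/- Let Y be an integer-valued random variable, U uniformly distributed on [0,1) and independent of Y, and Z = Y + U. Then the jittered quantiles dominate the true quantiles: for every p ∈ (0,1), Q_Z(p) > Q_Y(p), where Q denotes the quantile function Q(p) = inf{t : F(t) ≥ p}. This follows since Q_Z(p) − Q_Y(p) = (p − F_Y(Q_Y(p) − 1)) / m_Y(Q_Y(p)) and F_Y(Q_Y(p) − 1) < p. -/

import Mathlib

open MeasureTheory ProbabilityTheory

/-- Jittered quantiles dominate the true quantiles: if `Y` is integer-valued, `U` is
uniform on `[0,1)` and independent of `Y`, and `Z = Y + U`, then for every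
`p ∈ (0,1)`, `Q_Z(p) > Q_Y(p)`, where `Q` denotes the quantile function
`Q(p) = inf {t : F(t) ≥ p}`. -/
theorem jittered_quantiles_dominate
    {Ω : Type*} [MeasurableSpace Ω] (μ : Measure Ω) [IsProbabilityMeasure μ]
    (Y U : Ω → ℝ) (hY : Measurable Y) (hU : Measurable U)
    (hYint : ∀ ω, ∃ m : ℤ, Y ω = m)
    (hUdist : Measure.map U μ = volume.restrict (Set.Ico (0 : ℝ) 1))
    (hindep : IndepFun Y U μ)
    (FY FZ : ℝ → ℝ)
    (hFY : ∀ t, FY t = (μ {ω | Y ω ≤ t}).toReal)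
    (hFZ : ∀ t, FZ t = (μ {ω | Y ω + U ω ≤ t}).toReal)
    (QY QZ : ℝ → ℝ)
    (hQY : ∀ p, QY p = sInf {t : ℝ | p ≤ FY t})
    (hQZ : ∀ p, QZ p = sInf {t : ℝ | p ≤ FZ t}) :
    ∀ p ∈ Set.Ioo (0 : ℝ) 1, QY p < QZ p := by
  intro p hp
  obtain ⟨hp0, hp1⟩ := hp
  -- monotonicity of FY and FZ
  have hFYmono : Monotone FY := by
    intro a b hab
    rw [hFY, hFY]
    exact ENNReal.toReal_mono (measure_ne_top μ _)
      (measure_mono fun ω h => le_trans h hab)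
  have hFZmono : Monotone FZ := by
    intro a b hab
    rw [hFZ, hFZ]
    exact ENNReal.toReal_mono (measure_ne_top μ _)
      (measure_mono fun ω h => le_trans h hab)
  -- FY only depends on the floor
  have hfloor : ∀ t : ℝ, FY t = FY (⌊t⌋ : ℤ) := by
    intro t
    rw [hFY, hFY]
    congr 1
    apply congrArg
    ext ω
    obtain ⟨m, hm⟩ := hYint ω
    simp only [Set.mem_setOf_eq, hm]
    exact_mod_cast (Int.le_floor (α := ℝ)).symm
  -- Step A : some integer N with p ≤ FY N
  have hA : ∃ N : ℤ, p ≤ FY N := by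
    have hmono : Monotone (fun n : ℕ => {ω | Y ω ≤ (n : ℝ)}) := by
      intro a b hab ω h
      simp only [Set.mem_setOf_eq] at h ⊢
      exact le_trans h (by exact_mod_cast hab)
    have hunion : (⋃ n : ℕ, {ω | Y ω ≤ (n : ℝ)}) = Set.univ := by
      ext ω
      simp only [Set.mem_iUnion, Set.mem_univ, iff_true, Set.mem_setOf_eq]
      obtain ⟨m, hm⟩ := hYint ω
      exact ⟨m.toNat, by rw [hm]; exact_mod_cast Int.self_le_toNat m⟩
    have htend := tendsto_measure_iUnion_atTop (μ := μ) hmono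
    rw [hunion, measure_univ] at htend
    have hlt : ENNReal.ofReal p < 1 := by
      rw [← ENNReal.ofReal_one]
      exact ENNReal.ofReal_lt_ofReal_iff_of_nonneg hp0.le |>.2 hp1
    have hev := htend.eventually (eventually_gt_nhds hlt)
    obtain ⟨n, hn⟩ := hev.exists
    refine ⟨(n : ℤ), ?_⟩
    rw [hFY]
    have := ENNReal.toReal_mono (measure_ne_top μ _) hn.le
    rw [ENNReal.toReal_ofReal hp0.le] at this
    simpa using this
  -- Step B : some integer M with FY M < p
  have hB : ∃ M : ℤ, FY M < p := by
    have hanti : Antitone (fun n : ℕ => Y ⁻¹' Set.Iic (-(n : ℝ))) := by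
      intro a b hab ω h
      simp only [Set.mem_preimage, Set.mem_Iic] at h ⊢
      refine le_trans h (by simp only [neg_le_neg_iff]; exact_mod_cast hab)
    have hinter : (⋂ n : ℕ, Y ⁻¹' Set.Iic (-(n : ℝ))) = ∅ := by
      ext ω
      simp only [Set.mem_iInter, Set.mem_empty_iff_false, iff_false, not_forall,
        Set.mem_preimage, Set.mem_Iic, not_le]
      obtain ⟨m, hm⟩ := hYint ω
      refine ⟨(1 - m).toNat, ?_⟩
      rw [hm]
      have h1 : (1 - m : ℤ) ≤ ((1 - m).toNat : ℤ) := Int.self_le_toNat _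
      have : -(((1 - m).toNat : ℕ) : ℝ) ≤ (m : ℝ) - 1 := by
        have : ((1 - m : ℤ) : ℝ) ≤ (((1 - m).toNat : ℤ) : ℝ) := by exact_mod_cast h1
        push_cast at this ⊢
        linarith
      linarith
    have htend := tendsto_measure_iInter_atTop (μ := μ)
      (fun n => ((hY measurableSet_Iic).nullMeasurableSet))
      hanti ⟨0, measure_ne_top μ _⟩
    rw [hinter, measure_empty] at htend
    have hlt : (0 : ENNReal) < ENNReal.ofReal p := ENNReal.ofReal_pos.2 hp0
    have hev := htend.eventually (eventually_lt_nhds hlt)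
    obtain ⟨n, hn⟩ := hev.exists
    refine ⟨-(n : ℤ), ?_⟩
    rw [hFY]
    have := ENNReal.toReal_lt_toReal (measure_ne_top μ _) ENNReal.ofReal_ne_top |>.2 hn
    rw [ENNReal.toReal_ofReal hp0.le] at this
    push_cast
    exact this
  obtain ⟨N, hN⟩ := hA
  obtain ⟨M, hM⟩ := hB
  set S : Set ℝ := {t : ℝ | p ≤ FY t} with hS
  have hSne : S.Nonempty := ⟨(N : ℝ), hN⟩
  have hSbdd : BddBelow S := by
    refine ⟨(M : ℝ), fun t ht => ?_⟩
    by_contra hcon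
    push_neg at hcon
    exact absurd (le_trans ht (hFYmono hcon.le)) (not_le.2 hM)
  set q : ℝ := sInf S with hq
  -- q is an integer in S
  have hqmem : ∃ n : ℤ, (n : ℝ) = q := by
    obtain ⟨t, htS, htlt⟩ := Real.lt_sInf_add_pos hSne (by norm_num : (0:ℝ) < 1/2)
    have hfS : (⌊t⌋ : ℝ) ∈ S := by
      have : p ≤ FY t := htS
      rwa [hfloor t] at this
    have hq_le : q ≤ (⌊t⌋ : ℝ) := csInf_le hSbdd hfS
    refine ⟨⌊t⌋, le_antisymm ?_ hq_le⟩
    by_contra hcon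
    push_neg at hcon
    have : q < (⌊t⌋ : ℝ) := hcon
    obtain ⟨t', ht'S, ht'lt⟩ := (csInf_lt_iff hSbdd hSne).1 this
    have hfS' : (⌊t'⌋ : ℝ) ∈ S := by
      have : p ≤ FY t' := ht'S
      rwa [hfloor t'] at this
    have h1 : q ≤ (⌊t'⌋ : ℝ) := csInf_le hSbdd hfS'
    have h2 : ⌊t'⌋ < ⌊t⌋ := by
      have h2' : (⌊t'⌋ : ℝ) < (⌊t⌋ : ℝ) := lt_of_le_of_lt (Int.floor_le t') ht'lt
      exact_mod_cast h2'
    have h3 : (⌊t'⌋ : ℝ) + 1 ≤ (⌊t⌋ : ℝ) := by exact_mod_cast Int.lt_iff_add_one_le.1 h2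
    have h4 : (⌊t⌋ : ℝ) ≤ t := Int.floor_le t
    linarith
  obtain ⟨n, hn⟩ := hqmem
  -- FY (n-1) < p
  have hFn1 : FY ((n : ℝ) - 1) < p := by
    by_contra hcon
    push_neg at hcon
    have : ((n : ℝ) - 1) ∈ S := hcon
    have := csInf_le hSbdd this
    rw [← hq] at this
    linarith [hn ▸ this]
  -- choose δ
  set δ : ℝ := min (1/2) ((p - FY ((n:ℝ) - 1)) / 2) with hδ
  have hδ0 : 0 < δ := lt_min (by norm_num) (by linarith)
  have hδ1 : δ < 1 := lt_of_le_of_lt (min_le_left _ _) (by norm_num)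
  have hδp : FY ((n:ℝ) - 1) + δ < p := by
    have : δ ≤ (p - FY ((n:ℝ) - 1)) / 2 := min_le_right _ _
    linarith
  -- measure of {U ≤ δ}
  have hUδ : μ {ω | U ω ≤ δ} = ENNReal.ofReal δ := by
    have : {ω | U ω ≤ δ} = U ⁻¹' (Set.Iic δ) := rfl
    rw [this, ← Measure.map_apply hU measurableSet_Iic, hUdist,
      Measure.restrict_apply measurableSet_Iic]
    have : Set.Iic δ ∩ Set.Ico (0:ℝ) 1 = Set.Icc 0 δ := by
      ext x
      simp only [Set.mem_inter_iff, Set.mem_Iic, Set.mem_Ico, Set.mem_Icc]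
      constructor
      · intro h
        exact ⟨h.2.1, h.1⟩
      · intro h
        exact ⟨h.2, h.1, lt_of_le_of_lt h.2 hδ1⟩
    rw [this, Real.volume_Icc, sub_zero]
  -- Step F : FZ (n + δ) ≤ FY (n - 1) + δ
  have hFZbound : FZ ((n:ℝ) + δ) ≤ FY ((n:ℝ) - 1) + δ := by
    have hsub : {ω | Y ω + U ω ≤ (n:ℝ) + δ} ⊆
        {ω | Y ω ≤ (n:ℝ) - 1} ∪ {ω | U ω ≤ δ} := by
      intro ω hω
      obtain ⟨m, hm⟩ := hYint ω
      by_cases hcase : (m : ℝ) ≤ (n:ℝ) - 1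
      · exact Or.inl (by rw [Set.mem_setOf_eq, hm]; exact hcase)
      · right
        push_neg at hcase
        have hmn : (n : ℝ) ≤ (m : ℝ) := by
          have hz : (n : ℤ) - 1 < m := by exact_mod_cast hcase
          have : (n : ℤ) ≤ m := by omega
          exact_mod_cast this
        have : Y ω + U ω ≤ (n:ℝ) + δ := hω
        rw [hm] at this
        simp only [Set.mem_setOf_eq]
        linarith
    have hmeas := (measure_mono hsub).trans (measure_union_le (μ := μ) _ _)
    rw [hUδ] at hmeas
    rw [hFZ, hFY]
    calc (μ {ω | Y ω + U ω ≤ (n:ℝ) + δ}).toReal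
        ≤ (μ {ω | Y ω ≤ (n:ℝ) - 1} + ENNReal.ofReal δ).toReal :=
          ENNReal.toReal_mono (by
            exact ENNReal.add_ne_top.2 ⟨measure_ne_top μ _, ENNReal.ofReal_ne_top⟩) hmeas
      _ = (μ {ω | Y ω ≤ (n:ℝ) - 1}).toReal + δ := by
          rw [ENNReal.toReal_add (measure_ne_top μ _) ENNReal.ofReal_ne_top,
            ENNReal.toReal_ofReal hδ0.le]
  -- Step H : S_Z nonempty
  have hSZne : ∃ t : ℝ, p ≤ FZ t := by
    refine ⟨(N : ℝ) + 1, ?_⟩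
    have hU1 : μ {ω | 1 ≤ U ω} = 0 := by
      have : {ω | 1 ≤ U ω} = U ⁻¹' (Set.Ici 1) := rfl
      rw [this, ← Measure.map_apply hU measurableSet_Ici, hUdist,
        Measure.restrict_apply measurableSet_Ici]
      have : Set.Ici (1:ℝ) ∩ Set.Ico (0:ℝ) 1 = ∅ := by
        ext x
        simp only [Set.mem_inter_iff, Set.mem_Ici, Set.mem_Ico, Set.mem_empty_iff_false,
          iff_false, not_and]
        intro h1 _
        exact not_lt.2 h1
      rw [this, measure_empty]
    have hsub : {ω | Y ω ≤ (N:ℝ)} \ {ω | 1 ≤ U ω} ⊆ {ω | Y ω + U ω ≤ (N:ℝ) + 1} := by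
      rintro ω ⟨h1, h2⟩
      simp only [Set.mem_setOf_eq, not_le] at h1 h2 ⊢
      linarith
    have : μ {ω | Y ω ≤ (N:ℝ)} ≤ μ {ω | Y ω + U ω ≤ (N:ℝ) + 1} := by
      calc μ {ω | Y ω ≤ (N:ℝ)} = μ ({ω | Y ω ≤ (N:ℝ)} \ {ω | 1 ≤ U ω}) :=
            (measure_diff_null hU1).symm
        _ ≤ _ := measure_mono hsub
    have := ENNReal.toReal_mono (measure_ne_top μ _) this
    rw [hFZ]
    exact le_trans (by rw [hFY] at hN; exact hN) this
  obtain ⟨T, hT⟩ := hSZne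
  -- Step I : conclude
  have hlb : ∀ t ∈ {t : ℝ | p ≤ FZ t}, (n:ℝ) + δ ≤ t := by
    intro t ht
    by_contra hcon
    push_neg at hcon
    have : FZ t ≤ FZ ((n:ℝ) + δ) := hFZmono hcon.le
    have hFzt : FZ ((n:ℝ) + δ) < p := lt_of_le_of_lt hFZbound hδp
    exact absurd (le_trans ht this) (not_le.2 hFzt)
  have hQZge : (n:ℝ) + δ ≤ QZ p := by
    rw [hQZ]
    exact le_csInf ⟨T, hT⟩ hlb
  have hQYeq : QY p = (n:ℝ) := by rw [hQY, ← hS, ← hq, hn]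
  rw [hQYeq]
  linarith
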